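/- Let d ≥ 1 and n ≥ 1 be integers, let x ∈ ℤ^n, and let c ∈ [-d:d]^n be a solution vector for x. Define the set of solution pairs P(c) = {(a,b) ∈ [0:d]^n × [0:d]^n : a − b = c}. Suppose there exist two distinct solution pairs (a,b), (a',b') ∈ P(c) with a · x = a' · x. Then x admits a solution vector that is (1/(3(2d+1)))-unbalanced, i.e., there exists a nonzero c'' ∈ [-d:d]^n with c'' · x = 0 such that for some z ∈ [-d:d], |#{i : c''_i = z} − n/(2d+1)| > n/(3(2d+1)). -/
import Mathlib
open Finset

lemma fiber_sum {n d : ℕ} (t : Fin n → ℤ) (ht : ∀ i, t i ∈ Finset.Icc (-(d:ℤ)) d)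
    (f : ℤ → ℝ) :
    ∑ z ∈ Finset.Icc (-(d:ℤ)) d,
        f z * ((Finset.univ.filter fun i => t i = z).card : ℝ) = ∑ i, f (t i) := by
  rw [← Finset.sum_fiberwise_of_maps_to' (fun i _ => ht i) f]
  refine Finset.sum_congr rfl fun z _ => ?_
  rw [Finset.sum_const, nsmul_eq_mul, mul_comm]

lemma card_S (d : ℕ) : (Finset.Icc (-(d:ℤ)) d).card = 2*d + 1 := by
  rw [Int.card_Icc]; omega

lemma count_sum {n d : ℕ} (t : Fin n → ℤ) (ht : ∀ i, t i ∈ Finset.Icc (-(d:ℤ)) d) :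
    ∑ z ∈ Finset.Icc (-(d:ℤ)) d,
      ((Finset.univ.filter fun i => t i = z).card : ℝ) = n := by
  have := fiber_sum t ht (fun _ => 1)
  simpa using this

lemma lower_bound {n d : ℕ} (t : Fin n → ℤ) (ht : ∀ i, t i ∈ Finset.Icc (-(d:ℤ)) d)
    (m : ℝ)
    (hbal : ∀ z ∈ Finset.Icc (-(d:ℤ)) d,
      |((Finset.univ.filter fun i => t i = z).card : ℝ) - m| ≤ m/3) :
    (2*m/3) * (∑ z ∈ Finset.Icc (-(d:ℤ)) d, ((z:ℝ))^2) ≤ ∑ i, ((t i : ℝ))^2 := by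
  rw [← fiber_sum t ht (fun z => ((z:ℝ))^2), Finset.mul_sum]
  refine Finset.sum_le_sum fun z hz => ?_
  have h := abs_le.1 (hbal z hz)
  have hz2 := sq_nonneg ((z:ℝ))
  nlinarith [h.1, h.2]

lemma upper_bound {n d : ℕ} (t : Fin n → ℤ)
    (ht : ∀ i, t i ∈ Finset.Icc (-(d:ℤ)) d) (m : ℝ) (hm : 0 ≤ m)
    (hbal : ∀ z ∈ Finset.Icc (-(d:ℤ)) d,
      |((Finset.univ.filter fun i => t i = z).card : ℝ) - m| ≤ m/3) :
    ∑ i, ((t i : ℝ))^2 ≤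
      ((∑ z ∈ Finset.Icc (-(d:ℤ)) d, ((z:ℝ))^2) - 2*d) * (4*m/3) + n - 2*m/3 := by
  classical
  set S := Finset.Icc (-(d:ℤ)) d with hS
  set π : ℤ → ℝ := fun z => ((Finset.univ.filter fun i => t i = z).card : ℝ) with hπ
  have h0 : (0:ℤ) ∈ S := by
    simp only [hS, Finset.mem_Icc]
    omega
  have hcnt : ∑ z ∈ S, π z = n := count_sum t ht
  have hsq : ∑ i, ((t i : ℝ))^2 = ∑ z ∈ S, ((z:ℝ))^2 * π z :=
    (fiber_sum t ht (fun z => ((z:ℝ))^2)).symm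
  -- split off the contribution of (z^2 - 1)
  have hsplit : ∑ z ∈ S, ((z:ℝ))^2 * π z
      = (∑ z ∈ S, (((z:ℝ))^2 - 1) * π z) + ∑ z ∈ S, π z := by
    rw [← Finset.sum_add_distrib]
    exact Finset.sum_congr rfl fun z _ => by ring
  -- peel off z = 0
  have hpeel : (((0:ℤ):ℝ)^2 - 1) * π 0 + ∑ z ∈ S.erase 0, (((z:ℝ))^2 - 1) * π z
      = ∑ z ∈ S, (((z:ℝ))^2 - 1) * π z :=
    Finset.add_sum_erase S (fun z => (((z:ℝ))^2 - 1) * π z) h0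
  have h0bal := abs_le.1 (hbal 0 h0)
  have hterm : ∀ z ∈ S.erase 0,
      (((z:ℝ))^2 - 1) * π z ≤ (((z:ℝ))^2 - 1) * (4*m/3) := by
    intro z hz
    have hz0 : z ≠ 0 := (Finset.mem_erase.mp hz).1
    have hzS : z ∈ S := (Finset.mem_erase.mp hz).2
    have h1 : (1:ℤ) ≤ z^2 := by rcases lt_or_gt_of_ne hz0 with h|h <;> nlinarith
    have h1' : (1:ℝ) ≤ ((z:ℝ))^2 := by exact_mod_cast h1
    have hb := abs_le.1 (hbal z hzS)
    have : π z ≤ 4*m/3 := by linarith [hb.2]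
    exact mul_le_mul_of_nonneg_left this (by linarith)
  have herase : ∑ z ∈ S.erase 0, (((z:ℝ))^2 - 1) * π z
      ≤ ∑ z ∈ S.erase 0, (((z:ℝ))^2 - 1) * (4*m/3) :=
    Finset.sum_le_sum hterm
  have hsum_erase : ∑ z ∈ S.erase 0, (((z:ℝ))^2 - 1) * (4*m/3)
      = ((∑ z ∈ S, ((z:ℝ))^2) - 2*d) * (4*m/3) := by
    rw [← Finset.sum_mul]
    congr 1
    rw [Finset.sum_sub_distrib, Finset.sum_const, Finset.card_erase_of_mem h0, card_S]
    have : ∑ z ∈ S.erase 0, ((z:ℝ))^2 = ∑ z ∈ S, ((z:ℝ))^2 :=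
      Finset.sum_erase S (by norm_num)
    rw [this]
    push_cast
    ring
  have hπ0 : 2*m/3 ≤ π 0 := by linarith [h0bal.1]
  rw [hsq, hsplit, ← hpeel, hcnt]
  have : (((0:ℤ):ℝ)^2 - 1) * π 0 ≤ -(2*m/3) := by
    simp only [Int.cast_zero]
    nlinarith
  linarith [le_trans herase (le_of_eq hsum_erase)]

/-- Perfect Mixing Dichotomy for C = [-d : d]: if two distinct solution pairs
collide in dot product with `x`, then `x` admits a (1/(3(2d+1)))-unbalanced solution. -/
theorem stmt_0 (d n : ℕ) (hd : 1 ≤ d) (hn : 1 ≤ n) (x : Fin n → ℤ)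
    (c : Fin n → ℤ) (hc_mem : ∀ i, c i ∈ Finset.Icc (-(d : ℤ)) d)
    (hc_ne : c ≠ 0) (hc_sol : ∑ i, c i * x i = 0)
    (a b a' b' : Fin n → ℤ)
    (ha : ∀ i, a i ∈ Finset.Icc (0 : ℤ) d)
    (hb : ∀ i, b i ∈ Finset.Icc (0 : ℤ) d)
    (ha' : ∀ i, a' i ∈ Finset.Icc (0 : ℤ) d)
    (hb' : ∀ i, b' i ∈ Finset.Icc (0 : ℤ) d)
    (hab : a - b = c) (hab' : a' - b' = c)
    (hne : (a, b) ≠ (a', b'))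
    (hdot : ∑ i, a i * x i = ∑ i, a' i * x i) :
    ∃ c'' : Fin n → ℤ, c'' ≠ 0 ∧ (∀ i, c'' i ∈ Finset.Icc (-(d : ℤ)) d) ∧
      (∑ i, c'' i * x i = 0) ∧
      ∃ z ∈ Finset.Icc (-(d : ℤ)) d,
        |((Finset.univ.filter fun i => c'' i = z).card : ℝ) -
            (n : ℝ) / (2 * (d : ℝ) + 1)| >
          (n : ℝ) / (3 * (2 * (d : ℝ) + 1)) := by
  by_contra hcon
  push_neg at hcon
  set m : ℝ := (n : ℝ) / (2 * (d : ℝ) + 1) with hm_def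
  have hden : (0:ℝ) < 2 * (d : ℝ) + 1 := by positivity
  have hm_pos : 0 < m := by
    apply div_pos _ hden
    exact_mod_cast hn
  have hmm : (n : ℝ) / (3 * (2 * (d : ℝ) + 1)) = m / 3 := by
    rw [hm_def, div_div, mul_comm (2 * (d:ℝ) + 1) 3]
  have hn_eq : (n:ℝ) = (2 * (d:ℝ) + 1) * m := by
    rw [hm_def]; field_simp
  have hd' : (1:ℝ) ≤ (d:ℝ) := by exact_mod_cast hd
  -- the four solution vectors
  set v : Fin n → ℤ := a - a' with hv_def
  set p : Fin n → ℤ := c + v with hp_def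
  set q : Fin n → ℤ := c - v with hq_def
  have hci : ∀ i, c i = a i - b i := fun i => (congrFun hab i).symm
  have hci' : ∀ i, c i = a' i - b' i := fun i => (congrFun hab' i).symm
  have hv_mem : ∀ i, v i ∈ Finset.Icc (-(d:ℤ)) d := by
    intro i
    have h1 := Finset.mem_Icc.mp (ha i)
    have h2 := Finset.mem_Icc.mp (ha' i)
    simp only [hv_def, Pi.sub_apply, Finset.mem_Icc]
    omega
  have hp_mem : ∀ i, p i ∈ Finset.Icc (-(d:ℤ)) d := by
    intro i
    have h1 := Finset.mem_Icc.mp (ha i)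
    have h2 := Finset.mem_Icc.mp (hb' i)
    have h3 := hci' i
    simp only [hp_def, hv_def, Pi.add_apply, Pi.sub_apply, Finset.mem_Icc]
    omega
  have hq_mem : ∀ i, q i ∈ Finset.Icc (-(d:ℤ)) d := by
    intro i
    have h1 := Finset.mem_Icc.mp (ha' i)
    have h2 := Finset.mem_Icc.mp (hb i)
    have h3 := hci i
    simp only [hq_def, hv_def, Pi.sub_apply, Finset.mem_Icc]
    omega
  have hv_ne : v ≠ 0 := by
    intro hv0
    apply hne
    have haa : a = a' := by
      have := sub_eq_zero.mp (hv_def ▸ hv0 : a - a' = 0)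
      exact this
    have hbb : b = b' := by
      funext i
      have e1 := hci i
      have e2 := hci' i
      have e3 := congrFun haa i
      omega
    rw [haa, hbb]
  have hv_sol : ∑ i, v i * x i = 0 := by
    simp only [hv_def, Pi.sub_apply, sub_mul]
    rw [Finset.sum_sub_distrib, hdot, sub_self]
  have hp_sol : ∑ i, p i * x i = 0 := by
    simp only [hp_def, Pi.add_apply, add_mul]
    rw [Finset.sum_add_distrib, hc_sol, hv_sol, add_zero]
  have hq_sol : ∑ i, q i * x i = 0 := by
    simp only [hq_def, Pi.sub_apply, sub_mul]
    rw [Finset.sum_sub_distrib, hc_sol, hv_sol, sub_self]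
  -- balancedness
  have hbal_c : ∀ z ∈ Finset.Icc (-(d:ℤ)) d,
      |((Finset.univ.filter fun i => c i = z).card : ℝ) - m| ≤ m/3 := by
    intro z hz
    have := hcon c hc_ne hc_mem hc_sol z hz
    rwa [hmm] at this
  have hbal_v : ∀ z ∈ Finset.Icc (-(d:ℤ)) d,
      |((Finset.univ.filter fun i => v i = z).card : ℝ) - m| ≤ m/3 := by
    intro z hz
    have := hcon v hv_ne hv_mem hv_sol z hz
    rwa [hmm] at this
  -- abbreviations
  set S2 : ℝ := ∑ z ∈ Finset.Icc (-(d:ℤ)) d, ((z:ℝ))^2 with hS2_def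
  set U : ℝ := (S2 - 2*(d:ℝ)) * (4*m/3) + n - 2*m/3 with hU_def
  have hS2_lb : (1:ℝ) ≤ S2 := by
    have hdm : (d:ℤ) ∈ Finset.Icc (-(d:ℤ)) d := by
      simp only [Finset.mem_Icc]; omega
    have h1 : (((d:ℤ):ℝ))^2 ≤ S2 := by
      rw [hS2_def]
      exact Finset.single_le_sum (s := Finset.Icc (-(d:ℤ)) d)
        (f := fun z : ℤ => ((z:ℝ))^2) (fun z _ => sq_nonneg ((z:ℝ))) hdm
    have : (1:ℝ) ≤ (((d:ℤ):ℝ))^2 := by push_cast; nlinarith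
    linarith
  -- sum of squares bounds
  have hlow_c := lower_bound c hc_mem m hbal_c
  have hlow_v := lower_bound v hv_mem m hbal_v
  have hup_p : ∑ i, ((p i : ℝ))^2 ≤ max U 0 := by
    by_cases hp0 : p = 0
    · have : ∑ i, ((p i : ℝ))^2 = 0 := by
        rw [hp0]; simp
      rw [this]; exact le_max_right _ _
    · have hbal_p : ∀ z ∈ Finset.Icc (-(d:ℤ)) d,
          |((Finset.univ.filter fun i => p i = z).card : ℝ) - m| ≤ m/3 := by
        intro z hz
        have := hcon p hp0 hp_mem hp_sol z hz
        rwa [hmm] at this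
      exact le_trans (upper_bound p hp_mem m (le_of_lt hm_pos) hbal_p) (le_max_left _ _)
  have hup_q : ∑ i, ((q i : ℝ))^2 ≤ max U 0 := by
    by_cases hq0 : q = 0
    · have : ∑ i, ((q i : ℝ))^2 = 0 := by
        rw [hq0]; simp
      rw [this]; exact le_max_right _ _
    · have hbal_q : ∀ z ∈ Finset.Icc (-(d:ℤ)) d,
          |((Finset.univ.filter fun i => q i = z).card : ℝ) - m| ≤ m/3 := by
        intro z hz
        have := hcon q hq0 hq_mem hq_sol z hz
        rwa [hmm] at this
      exact le_trans (upper_bound q hq_mem m (le_of_lt hm_pos) hbal_q) (le_max_left _ _)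
  -- parallelogram identity
  have hident : ∑ i, ((p i : ℝ))^2 + ∑ i, ((q i : ℝ))^2
      = 2 * (∑ i, ((c i : ℝ))^2) + 2 * (∑ i, ((v i : ℝ))^2) := by
    rw [← Finset.sum_add_distrib, Finset.mul_sum, Finset.mul_sum, ← Finset.sum_add_distrib]
    refine Finset.sum_congr rfl fun i _ => ?_
    simp only [hp_def, hq_def, Pi.add_apply, Pi.sub_apply]
    push_cast
    ring
  -- final contradiction
  have hmax : max U 0 < 4*m/3 * S2 := by
    have hUlt : U < 4*m/3 * S2 := by
      rw [hU_def, hn_eq]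
      nlinarith
    have h0lt : (0:ℝ) < 4*m/3 * S2 := by nlinarith
    exact max_lt hUlt h0lt
  nlinarith [hlow_c, hlow_v, hup_p, hup_q, hident, hmax]
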